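/- Let A ∈ SL(2,ℝ) be hyperbolic with projective attractor a and repeller r, and let m be a finite Borel measure on ℝP¹ such that m(Â⁻ˡ(K)) ≥ m(K) for every compact set K ⊆ ℝP¹ and every l ≥ 1. Then m is supported on {a, r}. -/

import Mathlib

open Matrix MeasureTheory Set Filter Topology
open scoped ENNReal NNReal

noncomputable section

abbrev E2 := EuclideanSpace ℝ (Fin 2)
abbrev SL2 := Matrix.SpecialLinearGroup (Fin 2) ℝ

/-- The real projective line, with the quotient topology. -/
abbrev RP1 := Projectivization ℝ E2

instance : TopologicalSpace RP1 :=
  inferInstanceAs (TopologicalSpace (Quotient (projectivizationSetoid ℝ E2)))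
instance : MeasurableSpace RP1 := borel _
instance : BorelSpace RP1 := ⟨rfl⟩

/-- An element of `SL(2,ℝ)` as a continuous linear operator of Euclidean `ℝ²`. -/
def sl2CLM (A : SL2) : E2 →L[ℝ] E2 :=
  Matrix.toEuclideanCLM (𝕜 := ℝ) (A : Matrix (Fin 2) (Fin 2) ℝ)

theorem sl2CLM_injective (A : SL2) : Function.Injective (sl2CLM A) := by
  intro v w hvw
  have h2 := congrArg (sl2CLM A⁻¹) hvw
  simp only [sl2CLM] at h2
  rw [← ContinuousLinearMap.comp_apply, ← ContinuousLinearMap.comp_apply,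
    ← ContinuousLinearMap.mul_def, ← _root_.map_mul] at h2
  have h3 : ((A⁻¹ : SL2) : Matrix (Fin 2) (Fin 2) ℝ) * (A : Matrix (Fin 2) (Fin 2) ℝ) = 1 := by
    rw [← Matrix.SpecialLinearGroup.coe_mul, inv_mul_cancel, Matrix.SpecialLinearGroup.coe_one]
  rw [h3] at h2
  simpa using h2

/-- Projective action of `SL(2,ℝ)` on the real projective line. -/
def projAction (A : SL2) : RP1 → RP1 :=
  Projectivization.map ((sl2CLM A) : E2 →ₗ[ℝ] E2) (sl2CLM_injective A)

lemma continuous_projAction (A : SL2) : Continuous (projAction A) := by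
  unfold projAction Projectivization.map
  exact Continuous.quotient_map'
    (Continuous.subtype_mk ((sl2CLM A).continuous.comp continuous_subtype_val) _) _

instance : T2Space RP1 := by
  refine ⟨fun x y hxy => ?_⟩
  set u := y.rep with hu
  have hu0 : u ≠ 0 := y.rep_nonzero
  set w := x.rep with hw
  have hw0 : w ≠ 0 := x.rep_nonzero
  have hcompat : ∀ (p q : {v : E2 // v ≠ 0}), (projectivizationSetoid ℝ E2).r p q →
      (inner ℝ (p : E2) u : ℝ)^2 / ‖(p : E2)‖^2 = (inner ℝ (q : E2) u : ℝ)^2 / ‖(q : E2)‖^2 := by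
    rintro ⟨p, hp⟩ ⟨q, hq⟩ ⟨c, hc⟩
    have hc' : (c : ℝ) • q = p := hc
    have hcne : (c : ℝ) ≠ 0 := c.ne_zero
    subst hc'
    simp only [real_inner_smul_left, norm_smul, Real.norm_eq_abs, mul_pow, sq_abs]
    rw [mul_div_mul_left]
    exact pow_ne_zero 2 hcne
  set F : RP1 → ℝ := Quotient.lift (fun p : {v : E2 // v ≠ 0} =>
    (inner ℝ (p : E2) u : ℝ)^2 / ‖(p : E2)‖^2) hcompat with hF
  have hFc : Continuous F := by
    refine Continuous.quotient_lift ?_ _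
    refine Continuous.div ((continuous_subtype_val.inner continuous_const).pow 2)
      ((continuous_subtype_val.norm).pow 2) ?_
    exact fun p => pow_ne_zero 2 (norm_ne_zero_iff.2 p.2)
  have hFx : F x = (inner ℝ w u : ℝ)^2 / ‖w‖^2 := by
    conv_lhs => rw [← x.mk_rep]
    rfl
  have hFy : F y = ‖u‖^2 := by
    conv_lhs => rw [← y.mk_rep]
    show (inner ℝ u u : ℝ)^2 / ‖u‖^2 = ‖u‖^2
    rw [real_inner_self_eq_norm_sq]
    have : ‖u‖ ≠ 0 := norm_ne_zero_iff.2 hu0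
    field_simp
  have hnc : ∀ c : ℝ, c • u ≠ w := by
    intro c hc
    apply hxy
    rw [← x.mk_rep, ← y.mk_rep]
    exact (Projectivization.mk_eq_mk_iff' ℝ _ _ x.rep_nonzero y.rep_nonzero).2 ⟨c, hc⟩
  have hupos : (0:ℝ) < ‖u‖ := norm_pos_iff.2 hu0
  have hwpos : (0:ℝ) < ‖w‖ := norm_pos_iff.2 hw0
  have h1 : (inner ℝ w u : ℝ) < ‖w‖ * ‖u‖ := by
    rw [inner_lt_norm_mul_iff_real]
    intro h
    exact hnc (‖u‖⁻¹ * ‖w‖) (by rw [mul_smul, ← h, smul_smul, inv_mul_cancel₀ hupos.ne', one_smul])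
  have h2 : -(‖w‖ * ‖u‖) < (inner ℝ w u : ℝ) := by
    have := inner_lt_norm_mul_iff_real (F := E2) (x := w) (y := -u)
    rw [inner_neg_right, norm_neg] at this
    have h3 : -(inner ℝ w u : ℝ) < ‖w‖ * ‖u‖ := by
      rw [this]
      intro h
      rw [smul_neg] at h
      exact hnc (-(‖u‖⁻¹ * ‖w‖)) (by
        rw [neg_smul, ← smul_smul ‖u‖⁻¹ ‖w‖, ← smul_neg, ← h, smul_smul,
          inv_mul_cancel₀ hupos.ne', one_smul])
    linarith
  have hsq : (inner ℝ w u : ℝ)^2 < (‖w‖ * ‖u‖)^2 := sq_lt_sq' h2 h1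
  have hne : F x ≠ F y := by
    rw [hFx, hFy]
    apply ne_of_lt
    rw [div_lt_iff₀ (by positivity)]
    calc (inner ℝ w u : ℝ)^2 < (‖w‖ * ‖u‖)^2 := hsq
    _ = ‖u‖^2 * ‖w‖^2 := by ring
  exact separated_by_continuous hFc hne

/-- Let `A ∈ SL(2,ℝ)` be hyperbolic, with projective attractor `a` and
repeller `r` (the classes of eigenvectors for the eigenvalues of modulus `> 1`, `< 1`).
If `m` is a finite Borel measure on `ℝP¹` with `m(Â⁻ˡ(K)) ≥ m(K)` for every compact `K`
and every `l ≥ 1`, then `m` is supported on `{a, r}`. -/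
theorem almost_invariant_supported_on_fixed_points (A : SL2)
    (va vr : E2) (hva : va ≠ 0) (hvr : vr ≠ 0) (lam : ℝ) (hlam : 1 < |lam|)
    (heva : sl2CLM A va = lam • va) (hevr : sl2CLM A vr = lam⁻¹ • vr)
    (m : Measure RP1) [IsFiniteMeasure m]
    (hm : ∀ K : Set RP1, IsCompact K → ∀ l : ℕ, 1 ≤ l →
      m K ≤ m ((projAction A)^[l] ⁻¹' K)) :
    m ({Projectivization.mk ℝ va hva, Projectivization.mk ℝ vr hvr}ᶜ) = 0 := by
  have hlam0 : lam ≠ 0 := by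
    intro h; rw [h, abs_zero] at hlam; linarith
  have hlamsq : 1 < lam * lam := by
    rw [← abs_mul_abs_self]; nlinarith
  have hlamsub : lam - lam⁻¹ ≠ 0 := by
    intro h
    have h1 : lam = lam⁻¹ := sub_eq_zero.1 h
    have h2 : lam * lam = 1 := by nth_rewrite 2 [h1]; exact mul_inv_cancel₀ hlam0
    linarith
  -- linear independence of the two eigenvectors
  have hpair : ∀ s t : ℝ, s • va + t • vr = 0 → s = 0 ∧ t = 0 := by
    intro s t hst
    have hts : t • vr = -(s • va) := by
      rw [eq_neg_iff_add_eq_zero, add_comm]; exact hst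
    have h1 := congrArg (sl2CLM A) hst
    rw [map_add, _root_.map_smul, _root_.map_smul, map_zero, heva, hevr] at h1
    rw [smul_comm t lam⁻¹, hts, smul_neg, smul_smul, smul_smul] at h1
    have h2 : (s * lam - lam⁻¹ * s) • va = 0 := by
      rw [sub_smul, sub_eq_add_neg]; exact h1
    have h3 : s * lam - lam⁻¹ * s = 0 := by
      rcases smul_eq_zero.1 h2 with h | h
      · exact h
      · exact absurd h hva
    have h4 : s * (lam - lam⁻¹) = 0 := by linear_combination h3
    have hs : s = 0 := (mul_eq_zero.1 h4).resolve_right hlamsub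
    refine ⟨hs, ?_⟩
    rw [hs, zero_smul, zero_add] at hst
    exact (smul_eq_zero.1 hst).resolve_right hvr
  have hgne : ∀ s : ℝ, va + s • vr ≠ 0 := by
    intro s h
    have := (hpair 1 s (by rwa [one_smul])).1
    norm_num at this
  have hcoord : ∀ c d c' d' : ℝ, c • va + d • vr = c' • va + d' • vr → c = c' ∧ d = d' := by
    intro c d c' d' h
    have h0 : (c - c') • va + (d - d') • vr = 0 := by
      rw [sub_smul, sub_smul,
        show c • va - c' • va + (d • vr - d' • vr)
          = (c • va + d • vr) - (c' • va + d' • vr) from by abel, h, sub_self]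
    obtain ⟨h1, h2⟩ := hpair _ _ h0
    exact ⟨by linarith, by linarith⟩
  set g : ℝ → RP1 := fun s => Projectivization.mk ℝ (va + s • vr) (hgne s) with hgdef
  set μ : ℝ := lam⁻¹ * lam⁻¹ with hμdef
  have hμpos : 0 < μ := mul_self_pos.2 (inv_ne_zero hlam0)
  have hμmul : μ * (lam * lam) = 1 := by rw [hμdef]; field_simp
  have hμlt : μ < 1 := by nlinarith
  have hact : ∀ s : ℝ, projAction A (g s) = g (μ * s) := by
    intro s
    simp only [hgdef]
    unfold projAction
    rw [Projectivization.map_mk, Projectivization.mk_eq_mk_iff']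
    refine ⟨lam, ?_⟩
    simp only [ContinuousLinearMap.coe_coe]
    rw [map_add, _root_.map_smul, heva, hevr, smul_add, smul_smul, smul_smul]
    congr 2
    rw [hμdef]; field_simp
  have hit : ∀ (j : ℕ) (s : ℝ), (projAction A)^[j] (g s) = g (μ ^ j * s) := by
    intro j
    induction j with
    | zero => intro s; simp
    | succ n ih =>
      intro s
      rw [Function.iterate_succ_apply, hact, ih]
      congr 1
      ring
  have hginj : ∀ s t : ℝ, g s = g t → s = t := by
    intro s t h
    simp only [hgdef] at h
    obtain ⟨c, hc⟩ := (Projectivization.mk_eq_mk_iff' ℝ _ _ (hgne s) (hgne t)).1 h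
    rw [smul_add, smul_smul] at hc
    have h2 : c • va + (c * t) • vr = (1:ℝ) • va + s • vr := by rw [one_smul]; exact hc
    obtain ⟨h3, h4⟩ := hcoord _ _ _ _ h2
    rw [h3, one_mul] at h4; exact h4.symm
  set pa := Projectivization.mk ℝ va hva with hpa
  set pr := Projectivization.mk ℝ vr hvr with hpr
  have hfixa : projAction A pa = pa := by
    simp only [hpa]; unfold projAction
    rw [Projectivization.map_mk, Projectivization.mk_eq_mk_iff']
    exact ⟨lam, by simp only [ContinuousLinearMap.coe_coe]; exact heva.symm⟩
  have hfixr : projAction A pr = pr := by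
    simp only [hpr]; unfold projAction
    rw [Projectivization.map_mk, Projectivization.mk_eq_mk_iff']
    exact ⟨lam⁻¹, by simp only [ContinuousLinearMap.coe_coe]; exact hevr.symm⟩
  have hfixa' : ∀ j : ℕ, (projAction A)^[j] pa = pa := fun j => Function.iterate_fixed hfixa j
  have hfixr' : ∀ j : ℕ, (projAction A)^[j] pr = pr := fun j => Function.iterate_fixed hfixr j
  have hgnepa : ∀ s : ℝ, s ≠ 0 → g s ≠ pa := by
    intro s hs h
    simp only [hgdef, hpa] at h
    obtain ⟨c, hc⟩ := (Projectivization.mk_eq_mk_iff' ℝ _ _ (hgne s) hva).1 h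
    have h2 : c • va + (0:ℝ) • vr = (1:ℝ) • va + s • vr := by
      rw [zero_smul, add_zero, one_smul]; exact hc
    exact hs ((hcoord _ _ _ _ h2).2).symm
  have hgnepr : ∀ s : ℝ, g s ≠ pr := by
    intro s h
    simp only [hgdef, hpr] at h
    obtain ⟨c, hc⟩ := (Projectivization.mk_eq_mk_iff' ℝ _ _ (hgne s) hvr).1 h
    have h2 : (0:ℝ) • va + c • vr = (1:ℝ) • va + s • vr := by
      rw [zero_smul, zero_add, one_smul]; exact hc
    have := (hcoord _ _ _ _ h2).1
    norm_num at this
  have hcover : ∀ x : RP1, x = pa ∨ x = pr ∨ ∃ s : ℝ, s ≠ 0 ∧ x = g s := by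
    intro x
    have hb : LinearIndependent ℝ ![va, vr] := LinearIndependent.pair_iff.2 hpair
    have hcard : Fintype.card (Fin 2) = Module.finrank ℝ E2 := by
      simp [finrank_euclideanSpace_fin]
    set b := basisOfLinearIndependentOfCardEqFinrank hb hcard with hb2
    have hbcoe : ⇑b = ![va, vr] := coe_basisOfLinearIndependentOfCardEqFinrank hb hcard
    have hv0 : x.rep ≠ 0 := x.rep_nonzero
    obtain ⟨c, d, hrepr⟩ : ∃ c d : ℝ, c • va + d • vr = x.rep := by
      refine ⟨b.repr x.rep 0, b.repr x.rep 1, ?_⟩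
      have h := b.sum_repr x.rep
      rw [Fin.sum_univ_two, hbcoe] at h
      simpa using h
    by_cases hc : c = 0
    · right; left
      rw [hc, zero_smul, zero_add] at hrepr
      rw [← x.mk_rep, hpr]
      exact (Projectivization.mk_eq_mk_iff' ℝ _ _ hv0 hvr).2 ⟨d, hrepr⟩
    · by_cases hd : d = 0
      · left
        rw [hd, zero_smul, add_zero] at hrepr
        rw [← x.mk_rep, hpa]
        exact (Projectivization.mk_eq_mk_iff' ℝ _ _ hv0 hva).2 ⟨c, hrepr⟩
      · right; right
        refine ⟨d / c, div_ne_zero hd hc, ?_⟩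
        rw [← x.mk_rep]
        simp only [hgdef]
        refine (Projectivization.mk_eq_mk_iff' ℝ _ _ hv0 (hgne _)).2 ⟨c, ?_⟩
        rw [smul_add, smul_smul, show c * (d / c) = d from by field_simp]
        exact hrepr
  have hgcont : Continuous g := by
    simp only [hgdef]
    show Continuous fun s : ℝ =>
      @Quotient.mk' _ (projectivizationSetoid ℝ E2) (⟨va + s • vr, hgne s⟩ : {v : E2 // v ≠ 0})
    exact continuous_quotient_mk'.comp
      (Continuous.subtype_mk (continuous_const.add (continuous_id.smul continuous_const)) _)
  have hΦm : Measurable (projAction A) := (continuous_projAction A).measurable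
  have key : ∀ n : ℕ, m (g '' {s : ℝ | 1/((n:ℝ)+1) ≤ |s| ∧ |s| ≤ (n:ℝ)+1}) = 0 := by
    intro n
    set δ : ℝ := 1/((n:ℝ)+1) with hδdef
    set M : ℝ := (n:ℝ)+1 with hMdef
    have hnn : (0:ℝ) ≤ (n:ℝ) := Nat.cast_nonneg n
    have hMpos : 0 < M := by rw [hMdef]; linarith
    have hδpos : 0 < δ := by rw [hδdef]; positivity
    have hδM : δ ≤ M := by
      rw [hδdef, hMdef, div_le_iff₀ (by linarith)]
      nlinarith
    set C : Set ℝ := {s : ℝ | δ ≤ |s| ∧ |s| ≤ M} with hCdef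
    have hCc : IsCompact C := by
      refine IsCompact.of_isClosed_subset (isCompact_Icc (a := -M) (b := M)) ?_ ?_
      · have hCeq : C = abs ⁻¹' (Icc δ M) := rfl
        rw [hCeq]
        exact isClosed_Icc.preimage continuous_abs
      · intro s hs
        exact abs_le.1 hs.2
    have hKc : IsCompact (g '' C) := hCc.image hgcont
    have hKm : MeasurableSet (g '' C) := hKc.isClosed.measurableSet
    by_contra hpos
    obtain ⟨N, hN⟩ : ∃ N : ℕ, μ ^ N * M < δ := by
      obtain ⟨N, hN⟩ := exists_pow_lt_of_lt_one (div_pos hδpos hMpos) hμlt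
      exact ⟨N, (lt_div_iff₀ hMpos).1 hN⟩
    have hN1 : 1 ≤ N := by
      by_contra hN0
      have hN0' : N = 0 := by omega
      rw [hN0', pow_zero, one_mul] at hN
      linarith
    have hdis2 : ∀ k k' : ℕ, k < k' →
        Disjoint ((projAction A)^[(k+1)*N] ⁻¹' (g '' C))
          ((projAction A)^[(k'+1)*N] ⁻¹' (g '' C)) := by
      intro k k' hkk'
      rw [Set.disjoint_left]
      intro x hx hx'
      have hpaK : pa ∉ g '' C := by
        rintro ⟨s, hsC, hgs⟩
        refine hgnepa s (fun h0 => ?_) hgs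
        obtain ⟨h1', -⟩ := hsC
        rw [h0, abs_zero] at h1'
        linarith
      have hprK : pr ∉ g '' C := by
        rintro ⟨s, _, hgs⟩; exact hgnepr s hgs
      rcases hcover x with hxa | hxr | ⟨s, hs0, rfl⟩
      · rw [hxa, Set.mem_preimage, hfixa'] at hx; exact hpaK hx
      · rw [hxr, Set.mem_preimage, hfixr'] at hx; exact hprK hx
      · rw [Set.mem_preimage, hit] at hx hx'
        obtain ⟨t, htC, ht⟩ := hx
        obtain ⟨t', ht'C, ht'⟩ := hx'
        have h5 : t = μ ^ ((k+1)*N) * s := hginj _ _ ht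
        have h6 : t' = μ ^ ((k'+1)*N) * s := hginj _ _ ht'
        rw [h5] at htC
        rw [h6] at ht'C
        have hsplit : (k'+1)*N = (k'-k)*N + (k+1)*N := by
          have h7 : k' - k + (k+1) = k' + 1 := by omega
          rw [← add_mul, h7]
        have hq : μ ^ ((k'+1)*N) * s = μ ^ ((k'-k)*N) * (μ ^ ((k+1)*N) * s) := by
          rw [hsplit, pow_add]; ring
        have hpow1 : μ ^ ((k'-k)*N) ≤ μ ^ N :=
          pow_le_pow_of_le_one hμpos.le hμlt.le (Nat.le_mul_of_pos_left N (by omega))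
        have habs : |μ ^ ((k'+1)*N) * s| ≤ μ ^ N * M := by
          rw [hq, abs_mul, abs_of_nonneg (pow_nonneg hμpos.le _)]
          exact mul_le_mul hpow1 htC.2 (abs_nonneg _) (pow_nonneg hμpos.le _)
        have h8 := ht'C.1
        linarith
    have hdisj : Pairwise (Function.onFun Disjoint
        (fun k : ℕ => (projAction A)^[(k+1)*N] ⁻¹' (g '' C))) := by
      intro k k' hkk'
      rcases hkk'.lt_or_gt with h | h
      · exact hdis2 _ _ h
      · exact (hdis2 _ _ h).symm
    have hSm : ∀ k : ℕ, MeasurableSet ((projAction A)^[(k+1)*N] ⁻¹' (g '' C)) :=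
      fun k => (hΦm.iterate _) hKm
    have hsum := measure_iUnion (μ := m) hdisj hSm
    have hbound : (⊤ : ℝ≥0∞) ≤ m (⋃ k : ℕ, (projAction A)^[(k+1)*N] ⁻¹' (g '' C)) := by
      calc (⊤:ℝ≥0∞) = ∑' _ : ℕ, m (g '' C) :=
            (ENNReal.tsum_const_eq_top_of_ne_zero hpos).symm
        _ ≤ ∑' k : ℕ, m ((projAction A)^[(k+1)*N] ⁻¹' (g '' C)) :=
            ENNReal.tsum_le_tsum (fun k => hm _ hKc _
              (le_trans hN1 (Nat.le_mul_of_pos_left N (Nat.succ_pos k))))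
        _ = _ := hsum.symm
    exact absurd (le_trans hbound (measure_mono (Set.subset_univ _)))
      (measure_lt_top m Set.univ).not_ge
  have hsub : ({pa, pr}ᶜ : Set RP1) ⊆
      ⋃ n : ℕ, g '' {s : ℝ | 1/((n:ℝ)+1) ≤ |s| ∧ |s| ≤ (n:ℝ)+1} := by
    intro x hx
    simp only [Set.mem_compl_iff, Set.mem_insert_iff, Set.mem_singleton_iff, not_or] at hx
    rcases hcover x with h | h | ⟨s, hs0, rfl⟩
    · exact absurd h hx.1
    · exact absurd h hx.2
    · have hspos : 0 < |s| := abs_pos.2 hs0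
      set n := ⌈max |s| |s|⁻¹⌉₊ with hn
      refine Set.mem_iUnion.2 ⟨n, Set.mem_image_of_mem g ?_⟩
      have h1 : |s| ≤ (n:ℝ) + 1 := by
        have := Nat.le_ceil (max |s| |s|⁻¹)
        have h2 := le_max_left |s| |s|⁻¹
        rw [hn]; push_cast
        linarith
      have h2 : |s|⁻¹ ≤ (n:ℝ) + 1 := by
        have := Nat.le_ceil (max |s| |s|⁻¹)
        have h3 := le_max_right |s| |s|⁻¹
        rw [hn]; push_cast
        linarith
      constructor
      · rw [div_le_iff₀ (by positivity)]
        have h4 := mul_le_mul_of_nonneg_left h2 (le_of_lt hspos)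
        rw [mul_inv_cancel₀ hspos.ne'] at h4
        linarith
      · exact h1
  exact measure_mono_null hsub (measure_iUnion_null key)
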